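/- For N ≥ 7, the sequences defined by (x_{k+1}, y_{k+1}) = (x_k + y_k, (N−6)x_k + (N−5)y_k) with initial values x₂ = 3, y₂ = 3(N−4) have closed form x_k = (3/√(N−6))(Φ₁^{2k−3} + Φ₂^{2k−3}) and y_k = 3(Φ₁^{2k−2} + Φ₂^{2k−2}) for all k ≥ 2, where Φ₁ = (√(N−6)+√(N−2))/2 and Φ₂ = (√(N−6)−√(N−2))/2. -/

import Mathlib

set_option maxHeartbeats 1000000 in
theorem stmt_6 (N : ℕ) (hN : 7 ≤ N)
    (Phi1 Phi2 : ℝ)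
    (h1 : Phi1 = (Real.sqrt ((N : ℝ) - 6) + Real.sqrt ((N : ℝ) - 2)) / 2)
    (h2 : Phi2 = (Real.sqrt ((N : ℝ) - 6) - Real.sqrt ((N : ℝ) - 2)) / 2)
    (x y : ℕ → ℝ)
    (hx2 : x 2 = 3) (hy2 : y 2 = 3 * ((N : ℝ) - 4))
    (hrec : ∀ k : ℕ, 2 ≤ k →
      x (k + 1) = x k + y k ∧ y (k + 1) = ((N : ℝ) - 6) * x k + ((N : ℝ) - 5) * y k) :
    ∀ k : ℕ, 2 ≤ k →
      x k = (3 / Real.sqrt ((N : ℝ) - 6)) * (Phi1 ^ (2 * k - 3) + Phi2 ^ (2 * k - 3)) ∧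
      y k = 3 * (Phi1 ^ (2 * k - 2) + Phi2 ^ (2 * k - 2)) := by
  have hN7 : (7 : ℝ) ≤ (N : ℝ) := by exact_mod_cast hN
  set s := Real.sqrt ((N : ℝ) - 6) with hs
  set t := Real.sqrt ((N : ℝ) - 2) with ht
  have hs2 : s ^ 2 = (N : ℝ) - 6 := Real.sq_sqrt (by linarith)
  have ht2 : t ^ 2 = (N : ℝ) - 2 := Real.sq_sqrt (by linarith)
  have hspos : 0 < s := Real.sqrt_pos.mpr (by linarith)
  have hs0 : s ≠ 0 := ne_of_gt hspos
  have hP1 : Phi1 ^ 2 = s * Phi1 + 1 := by rw [h1]; nlinarith [hs2, ht2]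
  have hP2 : Phi2 ^ 2 = s * Phi2 + 1 := by rw [h2]; nlinarith [hs2, ht2]
  intro k hk
  induction k, hk using Nat.le_induction with
  | base =>
    constructor
    · rw [hx2, h1, h2]
      field_simp
      ring
    · rw [hy2, h1, h2]
      have : ((s + t) / 2) ^ 2 + ((s - t) / 2) ^ 2 = (s ^ 2 + t ^ 2) / 2 := by ring
      rw [show 2 * 2 - 2 = 2 from rfl, this, hs2, ht2]
      ring
  | succ k hk ih =>
    obtain ⟨ihx, ihy⟩ := ih
    obtain ⟨hxr, hyr⟩ := hrec k hk
    have e3 : 2 * (k + 1) - 3 = (2 * k - 3) + 2 := by omega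
    have e2 : 2 * (k + 1) - 2 = (2 * k - 3) + 3 := by omega
    have e23 : 2 * k - 2 = (2 * k - 3) + 1 := by omega
    have hP1c : Phi1 ^ 3 = ((N : ℝ) - 5) * Phi1 + s := by
      have : Phi1 ^ 3 = Phi1 * Phi1 ^ 2 := by ring
      rw [this, hP1]
      nlinarith [hP1, hs2]
    have hP2c : Phi2 ^ 3 = ((N : ℝ) - 5) * Phi2 + s := by
      have : Phi2 ^ 3 = Phi2 * Phi2 ^ 2 := by ring
      rw [this, hP2]
      nlinarith [hP2, hs2]
    rw [hxr, hyr, ihx, ihy, e3, e2, e23]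
    simp only [pow_add, pow_one]
    rw [hP1, hP2, hP1c, hP2c]
    set a := Phi1 ^ (2 * k - 3)
    set b := Phi2 ^ (2 * k - 3)
    constructor
    · field_simp
      ring
    · field_simp
      linear_combination (-a - b) * hs2
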